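/- Let τⁿ, τ ∈ D↑[0,T] with τⁿ(t) → τ(t) for all t in a dense subset of [0,T] containing 0 and T, and suppose the maximal jump of τⁿ tends to 0: sup_{t} (τⁿ(t) − τⁿ(t−)) → 0 as n → ∞. Let φⁿ → φ uniformly on compacts with φ continuous. Then for every discontinuity point t of τ, lim_{δ→0} limsup_{n→∞} d_H( φⁿ(τⁿ(B(t,δ))), φ([τ(t−), τ(t)]) ) = 0, where B(t,δ) = [t−δ, t+δ] ∩ [0,T] and d_H denotes the Hausdorff distance on compact subsets of ℝ. -/

import Mathlib

open Filter Set Topology Function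
set_option maxHeartbeats 1000000

/-- Clamp extension of a function monotone on `[0,T]`. -/
noncomputable def mext (T : ℝ) (f : ℝ → ℝ) : ℝ → ℝ := fun s => f (max 0 (min s T))

lemma mext_eq {T : ℝ} (f : ℝ → ℝ) {s : ℝ} (hs : s ∈ Icc 0 T) : mext T f s = f s := by
  simp [mext, min_eq_left hs.2, max_eq_right hs.1]

lemma mext_mono {T : ℝ} {f : ℝ → ℝ} (hf : MonotoneOn f (Icc 0 T)) (hT : 0 ≤ T) :
    Monotone (mext T f) := by
  intro s s' h
  exact hf ⟨le_max_left _ _, max_le hT (min_le_right _ _)⟩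
    ⟨le_max_left _ _, max_le hT (min_le_right _ _)⟩
    (max_le_max le_rfl (min_le_min_right _ h))

lemma leftLim_mext {T : ℝ} {f : ℝ → ℝ} (hf : MonotoneOn f (Icc 0 T)) (hT : 0 ≤ T)
    {u : ℝ} (hu : u ∈ Ioc 0 T) :
    Function.leftLim f u = Function.leftLim (mext T f) u ∧
      Tendsto f (𝓝[<] u) (𝓝 (Function.leftLim (mext T f) u)) := by
  have hg : Monotone (mext T f) := mext_mono hf hT
  have h1 : Tendsto (mext T f) (𝓝[<] u) (𝓝 (leftLim (mext T f) u)) := hg.tendsto_leftLim u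
  have hee : mext T f =ᶠ[𝓝[<] u] f := by
    filter_upwards [Ioo_mem_nhdsLT_of_mem (show u ∈ Ioc 0 u from ⟨hu.1, le_rfl⟩)] with s hs
    exact mext_eq f ⟨hs.1.le, hs.2.le.trans hu.2⟩
  have h2 : Tendsto f (𝓝[<] u) (𝓝 (leftLim (mext T f) u)) := h1.congr' hee
  have hne : (𝓝[<] u) ≠ ⊥ := (nhdsLT_neBot u).ne'
  exact ⟨leftLim_eq_of_tendsto h2, h2⟩

lemma dense_image {g : ℝ → ℝ} (hg : Monotone g) {s₁ s₂ x η η' : ℝ}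
    (h12 : s₁ ≤ s₂)
    (hrc : ∀ u ∈ Ico s₁ s₂, ContinuousWithinAt g (Ici u) u)
    (hj : ∀ u ∈ Ioc s₁ s₂, g u - Function.leftLim g u ≤ η)
    (hx : x ∈ Icc (g s₁) (g s₂)) (hη : 0 ≤ η) (hη' : η < η') :
    ∃ s ∈ Icc s₁ s₂, x - η' < g s ∧ g s ≤ x := by
  set A : Set ℝ := {s | s ∈ Icc s₁ s₂ ∧ x ≤ g s} with hA
  have hAne : A.Nonempty := ⟨s₂, ⟨h12, le_rfl⟩, hx.2⟩
  have hAbdd : BddBelow A := ⟨s₁, fun s hs => hs.1.1⟩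
  set w := sInf A with hw
  have hw1 : s₁ ≤ w := le_csInf hAne fun s hs => hs.1.1
  have hw2 : w ≤ s₂ := csInf_le hAbdd ⟨⟨h12, le_rfl⟩, hx.2⟩
  have C1 : ∀ s, s < w → g s ≤ x := by
    intro s hs
    rcases le_or_gt s s₁ with h | h
    · exact (hg h).trans hx.1
    · by_contra hc
      push_neg at hc
      exact absurd (csInf_le hAbdd ⟨⟨h.le, hs.le.trans hw2⟩, hc.le⟩) (not_le.2 hs)
  have C2 : ∀ s, w < s → s ≤ s₂ → x ≤ g s := by
    intro s hws hs2
    obtain ⟨a, haA, has⟩ := exists_lt_of_csInf_lt hAne hws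
    exact haA.2.trans (hg has.le)
  have C3 : x ≤ g w := by
    rcases eq_or_lt_of_le hw2 with h | h
    · rw [h]; exact hx.2
    · have hcw : ContinuousWithinAt g (Ici w) w := hrc w ⟨hw1, h⟩
      have ht : Tendsto g (𝓝[>] w) (𝓝 (g w)) :=
        hcw.tendsto.mono_left (nhdsWithin_mono _ Ioi_subset_Ici_self)
      refine ge_of_tendsto ht ?_
      filter_upwards [Ioo_mem_nhdsGT_of_mem (show w ∈ Ico w s₂ from ⟨le_rfl, h⟩)] with s hs
      exact C2 s hs.1 hs.2.le
  rcases eq_or_lt_of_le hw1 with h | h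
  · refine ⟨s₁, ⟨le_rfl, h12⟩, ?_, hx.1⟩
    have : g s₁ = x := le_antisymm hx.1 (h ▸ C3)
    linarith
  · have hll : Function.leftLim g w ≤ x := by
      refine le_of_tendsto (hg.tendsto_leftLim w) ?_
      filter_upwards [self_mem_nhdsWithin] with s hs
      exact C1 s hs
    have hjw : g w - Function.leftLim g w ≤ η := hj w ⟨h, hw2⟩
    have hll2 : x - η' < Function.leftLim g w := by linarith
    have hev : ∀ᶠ s in 𝓝[<] w, x - η' < g s :=
      (hg.tendsto_leftLim w).eventually_const_lt hll2
    have hev2 : ∀ᶠ s in 𝓝[<] w, s ∈ Ioo s₁ w := Ioo_mem_nhdsLT_of_mem ⟨h, le_rfl⟩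
    obtain ⟨s, hs1, hs2⟩ := (hev.and hev2).exists
    exact ⟨s, ⟨hs2.1.le, hs2.2.le.trans hw2⟩, hs1, C1 s hs2.2⟩

theorem stmt1
    (T : ℝ) (hT : 0 < T)
    (τn : ℕ → ℝ → ℝ) (τ : ℝ → ℝ)
    (hτn_mono : ∀ n, MonotoneOn (τn n) (Icc 0 T))
    (hτn_nonneg : ∀ n, ∀ t ∈ Icc (0:ℝ) T, 0 ≤ τn n t)
    (hτn_rc : ∀ n, ∀ t ∈ Ico (0:ℝ) T, ContinuousWithinAt (τn n) (Ici t) t)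
    (hτ_mono : MonotoneOn τ (Icc 0 T))
    (hτ_nonneg : ∀ t ∈ Icc (0:ℝ) T, 0 ≤ τ t)
    (hτ_rc : ∀ t ∈ Ico (0:ℝ) T, ContinuousWithinAt τ (Ici t) t)
    (S : Set ℝ) (hS_sub : S ⊆ Icc 0 T) (hS_dense : Icc (0:ℝ) T ⊆ closure S)
    (hS0 : (0:ℝ) ∈ S) (hST : T ∈ S)
    (hconv : ∀ t ∈ S, Tendsto (fun n => τn n t) atTop (nhds (τ t)))
    (hjump : ∀ ε > (0:ℝ), ∀ᶠ n in atTop, ∀ t ∈ Ioc (0:ℝ) T,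
      τn n t - Function.leftLim (τn n) t ≤ ε)
    (φn : ℕ → ℝ → ℝ) (φ : ℝ → ℝ)
    (hφn_cont : ∀ n, Continuous (φn n)) (hφ_cont : Continuous φ)
    (hφ_unif : ∀ Kc : Set ℝ, IsCompact Kc → TendstoUniformlyOn φn φ atTop Kc) :
    ∀ t ∈ Ioc (0:ℝ) T, Function.leftLim τ t ≠ τ t →
      ∀ ε > (0:ℝ), ∃ δ > (0:ℝ), ∀ᶠ n in atTop,
        Metric.hausdorffDist ((fun s => φn n (τn n s)) '' (Icc (t - δ) (t + δ) ∩ Icc 0 T))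
          (φ '' Icc (Function.leftLim τ t) (τ t)) < ε := by
  intro t ht hdisc ε hε
  obtain ⟨ht0, htT⟩ := ht
  set a := Function.leftLim τ t with ha_def
  set b := τ t with hb_def
  -- left limit facts
  obtain ⟨haeq, hta'⟩ := leftLim_mext hτ_mono hT.le (u := t) ⟨ht0, htT⟩
  have hσ : Monotone (mext T τ) := mext_mono hτ_mono hT.le
  have hta : Tendsto τ (𝓝[<] t) (𝓝 a) := by rw [ha_def, haeq]; exact hta'
  have hab : a ≤ b := by
    have := hσ.leftLim_le (le_refl t)
    rw [mext_eq τ ⟨ht0.le, htT⟩] at this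
    rw [ha_def, haeq]; exact this
  have ha0 : 0 ≤ a := by
    have h0 := hσ.le_leftLim ht0
    rw [mext_eq τ ⟨le_rfl, hT.le⟩] at h0
    rw [ha_def, haeq]
    exact le_trans (hτ_nonneg 0 ⟨le_rfl, hT.le⟩) h0
  have hbT : b ≤ τ T := hτ_mono ⟨ht0.le, htT⟩ ⟨hT.le, le_rfl⟩ htT
  -- compact set and uniform continuity
  set K : Set ℝ := Icc (-1 : ℝ) (τ T + 1) with hK_def
  have hKab : Icc a b ⊆ K := fun x hx => ⟨by linarith [hx.1], by linarith [hx.2]⟩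
  have hucφ := (isCompact_Icc (a := (-1:ℝ)) (b := τ T + 1)).uniformContinuousOn_of_continuous
    hφ_cont.continuousOn
  rw [Metric.uniformContinuousOn_iff] at hucφ
  obtain ⟨η, hη, hucφ⟩ := hucφ (ε/4) (by linarith)
  set κ := min (η/4) (2⁻¹ : ℝ) with hκ_def
  have hκ : 0 < κ := lt_min (by linarith) (by norm_num)
  have hκη : 3*κ < η := by
    have : κ ≤ η/4 := min_le_left _ _
    linarith
  have hκ1 : 2*κ ≤ 1 := by
    have : κ ≤ (2⁻¹:ℝ) := min_le_right _ _
    linarith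
  -- left window
  have hP₁ : ∃ δ₀ > 0, ∀ s, t - δ₀ < s → s < t → 0 < s ∧ a - κ < τ s := by
    have hU : {s | a - κ < τ s} ∈ 𝓝[<] t := hta (Ioi_mem_nhds (by linarith))
    have hI : Ioo 0 t ∈ 𝓝[<] t := Ioo_mem_nhdsLT_of_mem ⟨ht0, le_rfl⟩
    obtain ⟨l, hl, hsub⟩ := mem_nhdsLT_iff_exists_Ioo_subset.mp (inter_mem hU hI)
    refine ⟨t - max l 0, by simp [sub_pos]; exact ⟨hl, ht0⟩, fun s h1 h2 => ?_⟩
    have hs : s ∈ Ioo l t := ⟨lt_of_le_of_lt (le_max_left l 0) (by linarith), h2⟩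
    obtain ⟨hsU, hsI⟩ := hsub hs
    exact ⟨hsI.1, hsU⟩
  obtain ⟨δ₀, hδ₀, P₁⟩ := hP₁
  -- right window
  have hP₂ : ∃ δ₁ > 0, (t = T ∨ t + δ₁ ≤ T) ∧
      ∀ s, t ≤ s → s ≤ t + δ₁ → s ≤ T → τ s ≤ b + κ := by
    rcases eq_or_lt_of_le htT with heq | hlt
    · exact ⟨1, one_pos, Or.inl heq, fun s h1 h2 h3 => by
        have : s = t := le_antisymm (heq ▸ h3) h1
        rw [this]; linarith⟩
    · have hrc := (hτ_rc t ⟨ht0.le, hlt⟩).tendsto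
      have hV : {s | τ s ≤ b + κ} ∈ 𝓝[Ici t] t := by
        filter_upwards [hrc (Iio_mem_nhds (show b < b + κ by linarith))] with s hs
        exact le_of_lt hs
      obtain ⟨u, hu, hsub⟩ := mem_nhdsGE_iff_exists_Ico_subset.mp hV
      refine ⟨min (u - t) (T - t) / 2, by
        have h1 : (0:ℝ) < u - t := by simpa [sub_pos] using hu
        have h2 : (0:ℝ) < T - t := by linarith
        positivity, Or.inr ?_, fun s h1 h2 h3 => ?_⟩
      · have : min (u - t) (T - t) ≤ T - t := min_le_right _ _
        linarith
      · have : min (u - t) (T - t) ≤ u - t := min_le_left _ _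
        have hsu : s < u := by
          have h1' : (0:ℝ) < u - t := by simpa [sub_pos] using hu
          have h2' : (0:ℝ) < T - t := by linarith
          have : (0:ℝ) < min (u - t) (T - t) := lt_min h1' h2'
          nlinarith [min_le_left (u - t) (T - t)]
        exact hsub ⟨h1, hsu⟩
  obtain ⟨δ₁, hδ₁, hδ₁T, P₂⟩ := hP₂
  set δ := min (δ₀/2) (δ₁/2) with hδ_def
  have hδ : 0 < δ := lt_min (by linarith) (by linarith)
  have hδδ₀ : δ < δ₀ := lt_of_le_of_lt (min_le_left _ _) (by linarith)
  have hδδ₁ : δ < δ₁ := lt_of_le_of_lt (min_le_right _ _) (by linarith)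
  refine ⟨δ, hδ, ?_⟩
  -- dense picking
  have pick : ∀ p r : ℝ, p ∈ Icc 0 T → 0 < r → ∃ s ∈ S, |s - p| < r := by
    intro p r hp hr
    obtain ⟨s, hsS, hds⟩ := Metric.mem_closure_iff.mp (hS_dense hp) r hr
    exact ⟨s, hsS, by rw [abs_sub_comm]; simpa [Real.dist_eq] using hds⟩
  -- choose s₁
  have hpmid : ∀ s, t - δ < s → s < t → 0 < s ∧ a - κ < τ s := fun s h1 h2 =>
    P₁ s (by linarith) h2
  obtain ⟨s₁, hs₁S, hs₁d⟩ := pick (t - δ/2) (δ/2)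
    ⟨by linarith [(P₁ (t - δ/2) (by linarith) (by linarith)).1], by linarith⟩ (by linarith)
  rw [abs_sub_lt_iff] at hs₁d
  have hs₁l : t - δ < s₁ := by linarith [hs₁d.2]
  have hs₁r : s₁ < t := by linarith [hs₁d.1]
  have hs₁0 : 0 < s₁ := (hpmid s₁ hs₁l hs₁r).1
  have hs₁T : s₁ ≤ T := by linarith
  have hτs₁κ : a - κ < τ s₁ := (hpmid s₁ hs₁l hs₁r).2
  have hτs₁a : τ s₁ ≤ a := by
    have := hσ.le_leftLim hs₁r
    rw [mext_eq τ ⟨hs₁0.le, hs₁T⟩] at this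
    rw [ha_def, haeq]; exact this
  -- choose s₃
  obtain ⟨s₃, hs₃S, hs₃d⟩ := pick (t - (δ + δ₀)/2) ((δ₀ - δ)/2)
    ⟨by linarith [(P₁ (t - (δ + δ₀)/2) (by linarith) (by linarith)).1], by linarith⟩
    (by linarith)
  rw [abs_sub_lt_iff] at hs₃d
  have hs₃l : t - δ₀ < s₃ := by linarith [hs₃d.2]
  have hs₃r : s₃ < t - δ := by linarith [hs₃d.1]
  have hs₃0 : 0 < s₃ := (P₁ s₃ hs₃l (by linarith)).1
  have hs₃T : s₃ ≤ T := by linarith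
  have hτs₃ : a - κ < τ s₃ := (P₁ s₃ hs₃l (by linarith)).2
  -- choose s₂ and s₄
  have hs₂s₄ : ∃ s₂ ∈ S, ∃ s₄ ∈ S,
      (t ≤ s₂ ∧ s₂ ≤ t + δ ∧ s₂ ≤ T ∧ b ≤ τ s₂ ∧ τ s₂ ≤ b + κ) ∧
      (0 ≤ s₄ ∧ s₄ ≤ T ∧ (∀ s, s ≤ t + δ → s ≤ T → s ≤ s₄) ∧ τ s₄ ≤ b + κ) := by
    rcases hδ₁T with heq | hle
    · refine ⟨T, hST, T, hST, ⟨heq ▸ le_rfl, by linarith, le_rfl, ?_, ?_⟩,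
        hT.le, le_rfl, fun s _ h => h, ?_⟩
      · rw [← heq]
      · rw [← heq]; linarith
      · rw [← heq]; linarith
    · obtain ⟨s₂, hs₂S, hs₂d⟩ := pick (t + δ/2) (δ/2)
        ⟨by linarith, by linarith⟩ (by linarith)
      rw [abs_sub_lt_iff] at hs₂d
      have hs₂l : t < s₂ := by linarith [hs₂d.2]
      have hs₂r : s₂ < t + δ := by linarith [hs₂d.1]
      have hs₂T : s₂ ≤ T := by linarith
      obtain ⟨s₄, hs₄S, hs₄d⟩ := pick (t + (δ + δ₁)/2) ((δ₁ - δ)/2)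
        ⟨by linarith, by linarith⟩ (by linarith)
      rw [abs_sub_lt_iff] at hs₄d
      have hs₄l : t + δ < s₄ := by linarith [hs₄d.2]
      have hs₄r : s₄ < t + δ₁ := by linarith [hs₄d.1]
      refine ⟨s₂, hs₂S, s₄, hs₄S, ⟨hs₂l.le, hs₂r.le, hs₂T, ?_, ?_⟩,
        by linarith, by linarith, fun s h1 _ => by linarith, ?_⟩
      · exact hτ_mono ⟨ht0.le, htT⟩ ⟨by linarith, hs₂T⟩ hs₂l.le
      · exact P₂ s₂ hs₂l.le (by linarith) hs₂T
      · exact P₂ s₄ (by linarith) hs₄r.le (by linarith)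
  obtain ⟨s₂, hs₂S, s₄, hs₄S, ⟨hs₂t, hs₂δ, hs₂T, hbs₂, hτs₂⟩,
    hs₄0, hs₄T, hs₄ge, hτs₄⟩ := hs₂s₄
  have hs₁₂ : s₁ ≤ s₂ := le_trans hs₁r.le hs₂t
  -- eventual facts
  have EC : ∀ s ∈ S, ∀ᶠ n in atTop, dist (τn n s) (τ s) < κ := fun s hs =>
    Metric.tendsto_nhds.mp (hconv s hs) κ hκ
  filter_upwards [hjump κ hκ, EC s₁ hs₁S, EC s₂ hs₂S, EC s₃ hs₃S, EC s₄ hs₄S, EC T hST,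
    Metric.tendstoUniformlyOn_iff.mp (hφ_unif K isCompact_Icc) (ε/4) (by linarith)]
    with n h1 h2 h3 h4 h5 h6 h7
  rw [Real.dist_eq, abs_sub_lt_iff] at h2 h3 h4 h5 h6
  -- range bound
  have gK : ∀ s ∈ Icc (0:ℝ) T, τn n s ∈ K := by
    intro s hs
    have hub : τn n s ≤ τn n T := hτn_mono n hs ⟨hT.le, le_rfl⟩ hs.2
    exact ⟨by linarith [hτn_nonneg n s hs], by linarith [h6.1]⟩
  set W := Icc (t - δ) (t + δ) ∩ Icc (0:ℝ) T with hW_def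
  have hmain : Metric.hausdorffDist ((fun s => φn n (τn n s)) '' W) (φ '' Icc a b) ≤ ε/2 := by
    apply Metric.hausdorffDist_le_of_mem_dist (by linarith)
    · -- each image point is close to φ '' [a,b]
      rintro z ⟨s, hs, rfl⟩
      obtain ⟨hsw, hsIcc⟩ := hs
      have hlow : a - 2*κ ≤ τn n s := by
        have h34 : τn n s₃ ≤ τn n s := hτn_mono n ⟨hs₃0.le, hs₃T⟩ hsIcc (by linarith [hsw.1])
        linarith [h4.2]
      have hhigh : τn n s ≤ b + 2*κ := by
        have h45 : τn n s ≤ τn n s₄ := hτn_mono n hsIcc ⟨hs₄0, hs₄T⟩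
          (hs₄ge s hsw.2 hsIcc.2)
        linarith [h5.1]
      set z₀ := τn n s with hz₀
      set y₀ := max a (min z₀ b) with hy₀
      have hy₀mem : y₀ ∈ Icc a b := ⟨le_max_left _ _, max_le hab (min_le_right _ _)⟩
      have hy₀le : y₀ ≤ z₀ + 2*κ := max_le (by linarith) ((min_le_left _ _).trans (by linarith))
      have hy₀ge : z₀ - 2*κ ≤ y₀ :=
        le_trans (le_min (by linarith) (by linarith)) (le_max_right _ _)
      have hzK : z₀ ∈ K := gK s hsIcc
      have hd1 : dist (φn n z₀) (φ z₀) < ε/4 := by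
        rw [dist_comm]; exact h7 z₀ hzK
      have hd2 : dist (φ z₀) (φ y₀) < ε/4 := by
        apply hucφ z₀ hzK y₀ (hKab hy₀mem)
        rw [Real.dist_eq, abs_sub_lt_iff]
        constructor <;> linarith
      exact ⟨φ y₀, mem_image_of_mem φ hy₀mem,
        le_trans (dist_triangle _ (φ z₀) _) (by linarith)⟩
    · -- each point of φ '' [a,b] is close to the image
      rintro y ⟨x, hxab, rfl⟩
      have hgmono : Monotone (mext T (τn n)) := mext_mono (hτn_mono n) hT.le
      have hτn₁ : τn n s₁ ≤ x + κ := by linarith [h2.1, hxab.1]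
      have hτn₂ : x - κ ≤ τn n s₂ := by linarith [h3.2, hxab.2]
      set x' := max (τn n s₁) (min x (τn n s₂)) with hx'
      have hτn₁₂ : τn n s₁ ≤ τn n s₂ := hτn_mono n ⟨hs₁0.le, hs₁T⟩ ⟨by linarith, hs₂T⟩ hs₁₂
      have hx'mem : x' ∈ Icc (mext T (τn n) s₁) (mext T (τn n) s₂) := by
        rw [mext_eq _ ⟨hs₁0.le, hs₁T⟩, mext_eq _ ⟨by linarith, hs₂T⟩]
        exact ⟨le_max_left _ _, max_le hτn₁₂ (min_le_right _ _)⟩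
      have hx'close : |x' - x| ≤ κ := by
        rw [abs_sub_le_iff]
        constructor
        · exact sub_le_iff_le_add'.mpr (max_le (by linarith)
            ((min_le_left _ _).trans (by linarith)))
        · have : x - κ ≤ x' :=
            le_trans (le_min (by linarith) (by linarith)) (le_max_right _ _)
          linarith
      have hrcg : ∀ u ∈ Ico s₁ s₂, ContinuousWithinAt (mext T (τn n)) (Ici u) u := by
        intro u hu
        have hu0 : 0 < u := lt_of_lt_of_le hs₁0 hu.1
        have huT : u < T := lt_of_lt_of_le hu.2 hs₂T
        have hcw := hτn_rc n u ⟨hu0.le, huT⟩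
        apply hcw.congr_of_eventuallyEq
        · filter_upwards [Ico_mem_nhdsGE_of_mem (show u ∈ Ico u T from ⟨le_rfl, huT⟩)] with v hv
          exact mext_eq _ ⟨le_trans hu0.le hv.1, hv.2.le⟩
        · exact mext_eq _ ⟨hu0.le, huT.le⟩
      have hjg : ∀ u ∈ Ioc s₁ s₂, mext T (τn n) u - Function.leftLim (mext T (τn n)) u ≤ κ := by
        intro u hu
        have huIoc : u ∈ Ioc 0 T := ⟨lt_trans hs₁0 hu.1, le_trans hu.2 hs₂T⟩
        rw [mext_eq _ ⟨huIoc.1.le, huIoc.2⟩,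
          ← (leftLim_mext (hτn_mono n) hT.le huIoc).1]
        exact h1 u huIoc
      obtain ⟨s, hsmem, hgs1, hgs2⟩ :=
        dense_image hgmono hs₁₂ hrcg hjg hx'mem hκ.le (by linarith : κ < 2*κ)
      have hsIcc : s ∈ Icc (0:ℝ) T := ⟨le_trans hs₁0.le hsmem.1, le_trans hsmem.2 hs₂T⟩
      have hgs : mext T (τn n) s = τn n s := mext_eq _ hsIcc
      rw [hgs] at hgs1 hgs2
      have hsW : s ∈ W := ⟨⟨by linarith [hsmem.1], by linarith [hsmem.2]⟩, hsIcc⟩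
      have hzx : |τn n s - x| < 3*κ := by
        have hc := abs_sub_le_iff.mp hx'close
        rw [abs_sub_lt_iff]
        exact ⟨by linarith [hc.1], by linarith [hc.2]⟩
      have hzK : τn n s ∈ K := gK s hsIcc
      have hxK : x ∈ K := hKab hxab
      have hd1 : dist (φn n (τn n s)) (φ (τn n s)) < ε/4 := by
        rw [dist_comm]; exact h7 _ hzK
      have hd2 : dist (φ (τn n s)) (φ x) < ε/4 := by
        apply hucφ _ hzK _ hxK
        rw [Real.dist_eq]
        exact lt_trans hzx hκη
      refine ⟨φn n (τn n s), mem_image_of_mem _ hsW,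
        le_trans (dist_triangle _ (φ (τn n s)) _) ?_⟩
      have e1 := dist_comm (φ x) (φ (τn n s))
      have e2 := dist_comm (φ (τn n s)) (φn n (τn n s))
      linarith
  calc Metric.hausdorffDist ((fun s => φn n (τn n s)) '' W) (φ '' Icc a b) ≤ ε/2 := hmain
    _ < ε := by linarith
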